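/- Let T > 0 and let Ω ⊂ ℝ^d be an open set. Let k be nonnegative, nonincreasing, and absolutely continuous on [0,T] with derivative k̇ ∈ L₁(0,T). Then for any v ∈ L₂((0,T)×Ω) and any v₀ ∈ L₂(Ω), for almost every t ∈ (0,T) one has the L₂-norm inequality ∫_Ω v(t,x) · ∂_t(k ∗ [v(·,x) − v₀(x)])(t) dx ≥ ‖v(t,·)‖_{L₂(Ω)} · ∂_t(k ∗ [‖v(·,·)‖_{L₂(Ω)} − ‖v₀‖_{L₂(Ω)}])(t), where on the right-hand side k is convolved with the scalar function t ↦ ‖v(t,·)‖_{L₂(Ω)} − ‖v₀‖_{L₂(Ω)}. -/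

import Mathlib

open MeasureTheory Set

lemma rpow_half_mul_self {x : ℝ} (hx : 0 ≤ x) : x ^ (1/2:ℝ) * x ^ (1/2:ℝ) = x := by
  rw [← Real.rpow_add' hx (by norm_num)]
  norm_num

lemma MeasureTheory.MemLp.integrable_mul₂ {X : Type*} [MeasurableSpace X] {μ : Measure X} {f g : X → ℝ}
    (hf : MemLp f 2 μ) (hg : MemLp g 2 μ) : Integrable (fun a => f a * g a) μ := by
  have h := hg.smul hf (p := 2) (q := 2) (r := 1)
  exact memLp_one_iff_integrable.mp h

lemma integral_mul_le_cs {X : Type*} [MeasurableSpace X] {μ : Measure X} {f g : X → ℝ}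
    (hf : MemLp f 2 μ) (hg : MemLp g 2 μ) :
    ∫ a, f a * g a ∂μ ≤ (∫ a, f a ^ 2 ∂μ) ^ (1/2:ℝ) * (∫ a, g a ^ 2 ∂μ) ^ (1/2:ℝ) := by
  have h2 : (2:ℝ).HolderConjugate 2 := by constructor <;> norm_num
  have hf2 : MemLp f (ENNReal.ofReal 2) μ := by
    convert hf using 2; norm_num
  have hg2 : MemLp g (ENNReal.ofReal 2) μ := by
    convert hg using 2; norm_num
  have key := integral_mul_norm_le_Lp_mul_Lq (μ := μ) h2 hf2 hg2
  have e1 : ∀ (h : X → ℝ), ∫ a, ‖h a‖ ^ (2:ℝ) ∂μ = ∫ a, h a ^ 2 ∂μ := by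
    intro h
    refine integral_congr_ae (Filter.Eventually.of_forall fun a => ?_)
    show ‖h a‖ ^ (2:ℝ) = h a ^ 2
    rw [show ((2:ℝ)) = ((2:ℕ):ℝ) by norm_num, Real.rpow_natCast]
    simp [sq_abs]
  rw [e1 f, e1 g] at key
  calc ∫ a, f a * g a ∂μ ≤ ‖∫ a, f a * g a ∂μ‖ := le_abs_self _
    _ ≤ ∫ a, ‖f a * g a‖ ∂μ := norm_integral_le_integral_norm _
    _ = ∫ a, ‖f a‖ * ‖g a‖ ∂μ := by simp [abs_mul]
    _ ≤ _ := by simpa using key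

lemma kdot_ae_nonpos {T : ℝ} (hT : 0 < T) {k kdot : ℝ → ℝ}
    (hkdot : IntegrableOn kdot (Ioo 0 T))
    (hk : ∀ t ∈ Icc 0 T, k t = k 0 + ∫ s in (0:ℝ)..t, kdot s)
    (hkmono : ∀ s ∈ Icc 0 T, ∀ t ∈ Icc 0 T, s ≤ t → k t ≤ k s) :
    ∀ᵐ s ∂(volume.restrict (Ioo 0 T)), kdot s ≤ 0 := by
  have hkdot' : IntegrableOn kdot (Icc 0 T) := by
    rwa [IntegrableOn, Measure.restrict_congr_set Ioo_ae_eq_Icc] at hkdot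
  set g : ℝ → ℝ := (Ioo 0 T).indicator kdot with hg_def
  have hg : Integrable g volume := by
    rw [hg_def, integrable_indicator_iff measurableSet_Ioo]; exact hkdot
  -- integral of g over any closed ball centered in (0,T) is ≤ 0
  have key : ∀ x ∈ Ioo 0 T, ∀ r : ℝ, 0 < r → ∫ y in Metric.closedBall x r, g y ≤ 0 := by
    intro x hx r hr
    set a' : ℝ := max (x - r) 0 with ha'
    set b' : ℝ := min (x + r) T with hb'
    have ha'x : a' ≤ x := max_le (by linarith) hx.1.le
    have hxb' : x ≤ b' := le_min (by linarith) hx.2.le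
    have hab : a' ≤ b' := ha'x.trans hxb'
    have ha'I : a' ∈ Icc 0 T := ⟨le_max_right _ _, le_trans (hab.trans (min_le_right _ _)) le_rfl⟩
    have hb'I : b' ∈ Icc 0 T := ⟨(le_max_right _ _).trans hab, min_le_right _ _⟩
    have hset : ((Metric.closedBall x r ∩ Ioo 0 T : Set ℝ)) =ᵐ[volume] (Ioc a' b' : Set ℝ) := by
      rw [Filter.eventuallyEq_set]
      have hnull : ∀ᵐ y : ℝ ∂volume, y ∉ ({a', b'} : Set ℝ) := by
        refine measure_eq_zero_iff_ae_notMem.mp ?_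
        exact measure_union_null (measure_singleton _) (measure_singleton _)
      filter_upwards [hnull] with y hy
      simp only [Set.mem_insert_iff, Set.mem_singleton_iff, not_or] at hy
      rw [Real.closedBall_eq_Icc]
      constructor
      · rintro ⟨⟨h1, h2⟩, h3, h4⟩
        constructor
        · rcases lt_or_eq_of_le (max_le h1 h3.le : a' ≤ y) with h | h
          · exact h
          · exact absurd h.symm hy.1
        · exact le_min h2 h4.le
      · rintro ⟨h1, h2⟩
        have hyb : y < b' := lt_of_le_of_ne h2 hy.2
        have h1' : a' < y := h1
        refine ⟨⟨?_, ?_⟩, ?_, ?_⟩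
        · exact le_of_lt (lt_of_le_of_lt (le_max_left _ _) h1')
        · exact h2.trans (min_le_left _ _)
        · exact lt_of_le_of_lt (le_max_right _ _) h1'
        · exact lt_of_lt_of_le hyb (min_le_right _ _)
    have e1 : ∫ y in Metric.closedBall x r, g y = ∫ y in Ioc a' b', kdot y := by
      rw [hg_def, setIntegral_indicator measurableSet_Ioo, setIntegral_congr_set hset]
    rw [e1]
    have hint1 : IntervalIntegrable kdot volume 0 a' :=
      (intervalIntegrable_iff_integrableOn_Ioc_of_le ha'I.1).mpr
        (hkdot'.mono_set (Ioc_subset_Icc_self.trans (Icc_subset_Icc le_rfl ha'I.2)))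
    have hint2 : IntervalIntegrable kdot volume 0 b' :=
      (intervalIntegrable_iff_integrableOn_Ioc_of_le hb'I.1).mpr
        (hkdot'.mono_set (Ioc_subset_Icc_self.trans (Icc_subset_Icc le_rfl hb'I.2)))
    have e2 : ∫ y in Ioc a' b', kdot y = (∫ s in (0:ℝ)..b', kdot s) - ∫ s in (0:ℝ)..a', kdot s := by
      rw [← intervalIntegral.integral_of_le hab,
        intervalIntegral.integral_interval_sub_left hint2 hint1]
    rw [e2]
    have hka := hk a' ha'I
    have hkb := hk b' hb'I
    have := hkmono a' ha'I b' hb'I hab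
    linarith
  have hloc : LocallyIntegrable g volume := hg.locallyIntegrable
  have hae := IsUnifLocDoublingMeasure.ae_tendsto_average (μ := (volume : Measure ℝ)) hloc 1
  rw [ae_restrict_iff' measurableSet_Ioo]
  filter_upwards [hae] with x hx hxmem
  have hev : ∀ᶠ j in nhdsWithin (0:ℝ) (Ioi 0), x ∈ Metric.closedBall ((fun _ => x) j) (1 * j) := by
    filter_upwards [self_mem_nhdsWithin] with j hj
    have : (0:ℝ) ≤ 1 * j := by simpa using le_of_lt (mem_Ioi.mp hj)
    exact Metric.mem_closedBall_self this
  have ht : Filter.Tendsto (fun j => ⨍ y in Metric.closedBall x j, g y)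
      (nhdsWithin (0:ℝ) (Ioi 0)) (nhds (g x)) :=
    hx (fun _ => x) id Filter.tendsto_id hev
  have hgx : g x ≤ 0 := by
    refine le_of_tendsto ht ?_
    filter_upwards [self_mem_nhdsWithin] with j hj
    rw [setAverage_eq]
    simp only [smul_eq_mul]
    exact mul_nonpos_iff.mpr (Or.inl ⟨inv_nonneg.mpr ENNReal.toReal_nonneg,
      key x hxmem j hj⟩)
  rwa [hg_def, Set.indicator_of_mem hxmem] at hgx

set_option maxHeartbeats 1000000

/-- **The `L₂`-norm inequality** for operators `∂ₜ(k ∗ ·)` (Vergara–Zacher): for a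
nonnegative nonincreasing kernel `k ∈ H¹₁((0,T))` with derivative `kdot`, where
`∂ₜ(k ∗ w)(t) = k(0) w(t) + ∫₀ᵗ kdot(s) w(t-s) ds` acting in the time variable,
any `v ∈ L₂((0,T)×Ω)` and `v₀ ∈ L₂(Ω)` satisfy, for a.e. `t ∈ (0,T)`,
`∫_Ω v ∂ₜ(k ∗ [v - v₀]) dx ≥ ‖v(t)‖_{L₂(Ω)} ∂ₜ(k ∗ [‖v(·)‖_{L₂(Ω)} - ‖v₀‖_{L₂(Ω)}])(t)`. -/
theorem L2_norm_inequality
    (d : ℕ) (T : ℝ) (hT : 0 < T)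
    (Ω : Set (EuclideanSpace ℝ (Fin d))) (hΩ : IsOpen Ω)
    (k kdot : ℝ → ℝ)
    (hkdot : IntegrableOn kdot (Ioo 0 T))
    (hk : ∀ t ∈ Icc 0 T, k t = k 0 + ∫ s in (0:ℝ)..t, kdot s)
    (hknonneg : ∀ t ∈ Icc 0 T, 0 ≤ k t)
    (hkmono : ∀ s ∈ Icc 0 T, ∀ t ∈ Icc 0 T, s ≤ t → k t ≤ k s)
    (v : ℝ → EuclideanSpace ℝ (Fin d) → ℝ)
    (hv : MemLp (fun p : ℝ × EuclideanSpace ℝ (Fin d) => v p.1 p.2) 2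
      ((volume.restrict (Ioo 0 T)).prod (volume.restrict Ω)))
    (v₀ : EuclideanSpace ℝ (Fin d) → ℝ)
    (hv₀ : MemLp v₀ 2 (volume.restrict Ω))
    (N : ℝ → ℝ) (hN : ∀ t, N t = (∫ x in Ω, (v t x) ^ 2) ^ (1/2 : ℝ))
    (N₀ : ℝ) (hN₀ : N₀ = (∫ x in Ω, (v₀ x) ^ 2) ^ (1/2 : ℝ)) :
    ∀ᵐ t ∂(volume.restrict (Ioo 0 T)),
      ∫ x in Ω, v t x *
          (k 0 * (v t x - v₀ x) + ∫ s in (0:ℝ)..t, kdot s * (v (t - s) x - v₀ x))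
        ≥ N t * (k 0 * (N t - N₀) + ∫ s in (0:ℝ)..t, kdot s * (N (t - s) - N₀)) := by
  
  haveI hμT_fin : IsFiniteMeasure (volume.restrict (Ioo 0 T)) := by
    constructor
    rw [Measure.restrict_apply_univ]
    simp [Real.volume_Ioo]
  have hvm := hv.aestronglyMeasurable
  have hsq : Integrable (fun p : ℝ × EuclideanSpace ℝ (Fin d) => v p.1 p.2 ^ 2)
      ((volume.restrict (Ioo 0 T)).prod (volume.restrict Ω)) := hv.integrable_sq
  have hslice : ∀ᵐ t ∂(volume.restrict (Ioo 0 T)), MemLp (v t) 2 (volume.restrict Ω) := by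
    filter_upwards [hsq.prod_right_ae, hvm.prodMk_left] with t h1 h2
    exact (memLp_two_iff_integrable_sq h2).mpr h1
  have hInonneg : ∀ τ, 0 ≤ ∫ x in Ω, v τ x ^ 2 := fun τ => integral_nonneg fun x => sq_nonneg _
  have hNnonneg : ∀ τ, 0 ≤ N τ := fun τ => by
    rw [hN]; exact Real.rpow_nonneg (hInonneg τ) _
  have hN₀nonneg : 0 ≤ N₀ := by
    rw [hN₀]; exact Real.rpow_nonneg (integral_nonneg fun x => sq_nonneg _) _
  have hNsq : ∀ τ, N τ * N τ = ∫ x in Ω, v τ x ^ 2 := fun τ => by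
    rw [hN]; exact rpow_half_mul_self (hInonneg τ)
  have hIm : AEStronglyMeasurable (fun τ => ∫ x in Ω, v τ x ^ 2) (volume.restrict (Ioo 0 T)) :=
    hsq.1.integral_prod_right'
  have hNm : AEStronglyMeasurable N (volume.restrict (Ioo 0 T)) := by
    have hNs : N = fun τ => Real.sqrt (∫ x in Ω, v τ x ^ 2) := funext fun τ => by
      rw [hN, Real.sqrt_eq_rpow]
    rw [hNs]
    exact Real.continuous_sqrt.comp_aestronglyMeasurable hIm
  have hNL2 : MemLp N 2 (volume.restrict (Ioo 0 T)) := by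
    refine (memLp_two_iff_integrable_sq hNm).mpr ?_
    have hNs2 : (fun τ => N τ ^ 2) = fun τ => ∫ x in Ω, v τ x ^ 2 := funext fun τ => by
      rw [sq, hNsq]
    rw [hNs2]
    exact hsq.integral_prod_left
  have hNint : Integrable N (volume.restrict (Ioo 0 T)) :=
    hNL2.integrable (by norm_num)
  have hkneg := kdot_ae_nonpos hT hkdot hk hkmono
  -- transfer ae facts to plain volume
  have hsliceV : ∀ᵐ τ ∂(volume : Measure ℝ), τ ∈ Ioo 0 T →
      MemLp (v τ) 2 (volume.restrict Ω) := ae_imp_of_ae_restrict hslice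
  have hknegV : ∀ᵐ s ∂(volume : Measure ℝ), s ∈ Ioo 0 T → kdot s ≤ 0 :=
    ae_imp_of_ae_restrict hkneg
  -- convolution integrand integrability
  have hconv0 : ∀ᵐ t ∂(volume : Measure ℝ),
      Integrable (fun s => ((Ioo 0 T).indicator (fun r => |kdot r|)) s *
        ((Ioo 0 T).indicator N) (t - s)) volume := by
    have hfI : Integrable ((Ioo 0 T).indicator fun r => |kdot r|) (volume : Measure ℝ) := by
      rw [integrable_indicator_iff measurableSet_Ioo]; exact hkdot.abs
    have hgI : Integrable ((Ioo 0 T).indicator N) (volume : Measure ℝ) := by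
      rw [integrable_indicator_iff measurableSet_Ioo]; exact hNint
    exact (hfI.convolution_integrand (ContinuousLinearMap.mul ℝ ℝ) hgI).prod_right_ae
  have hconv0' := ae_restrict_of_ae (s := Ioo 0 T) hconv0
  -- main part
  filter_upwards [hslice, hconv0', ae_restrict_mem measurableSet_Ioo] with t hvt hI0 ht
  have htIcc : t ∈ Icc 0 T := ⟨ht.1.le, ht.2.le⟩
  have hsubT : Ioo 0 t ⊆ Ioo 0 T := Ioo_subset_Ioo le_rfl ht.2.le
  have hνeq : (volume : Measure ℝ).restrict (Ioo 0 t)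
      = (volume.restrict (Ioo 0 T)).restrict (Ioo 0 t) := by
    rw [Measure.restrict_restrict measurableSet_Ioo, inter_eq_self_of_subset_left hsubT]
  -- a.e. facts on (0, t)
  have hshift : ∀ᵐ s ∂(volume.restrict (Ioo 0 t)), MemLp (v (t - s)) 2 (volume.restrict Ω) := by
    have h1 : ∀ᵐ s ∂(volume : Measure ℝ), (t - s) ∈ Ioo 0 T →
        MemLp (v (t - s)) 2 (volume.restrict Ω) :=
      (Measure.measurePreserving_sub_left volume t).quasiMeasurePreserving.ae hsliceV
    refine (ae_restrict_of_ae h1).mp ((ae_restrict_mem measurableSet_Ioo).mono ?_)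
    intro s hs h
    exact h ⟨by linarith [hs.2], by linarith [hs.1, ht.2]⟩
  have hkneg' : ∀ᵐ s ∂(volume.restrict (Ioo 0 t)), kdot s ≤ 0 :=
    ae_restrict_of_ae_restrict_of_subset hsubT hkneg
  have hconv' : IntegrableOn (fun s => |kdot s| * N (t - s)) (Ioo 0 t) volume := by
    refine (hI0.integrableOn (s := Ioo 0 t)).congr_fun ?_ measurableSet_Ioo
    intro s hs
    have h1 : s ∈ Ioo 0 T := hsubT hs
    have h2 : t - s ∈ Ioo 0 T := ⟨by linarith [hs.2], by linarith [hs.1, ht.2]⟩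
    simp [Set.indicator_of_mem h1, Set.indicator_of_mem h2]
  have hkdot_t : IntegrableOn kdot (Ioo 0 t) volume := hkdot.mono_set hsubT
  -- measurability on the product (0,t) × Ω
  have hprodeq : ((volume : Measure ℝ).restrict (Ioo 0 t)).prod (volume.restrict Ω)
      = ((volume.restrict (Ioo 0 T)).prod (volume.restrict Ω)).restrict
          ((Ioo 0 t) ×ˢ (univ : Set (EuclideanSpace ℝ (Fin d)))) := by
    rw [hνeq, ← Measure.prod_restrict, Measure.restrict_univ]
  have hv_prod_t : AEStronglyMeasurable (fun p : ℝ × EuclideanSpace ℝ (Fin d) => v p.1 p.2)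
      (((volume : Measure ℝ).restrict (Ioo 0 t)).prod (volume.restrict Ω)) := by
    rw [hprodeq]; exact hvm.restrict
  have hmp : MeasurePreserving (fun s => t - s) ((volume : Measure ℝ).restrict (Ioo 0 t))
      ((volume : Measure ℝ).restrict (Ioo 0 t)) := by
    have h := (Measure.measurePreserving_sub_left (volume : Measure ℝ) t).restrict_preimage
      (s := Ioo 0 t) measurableSet_Ioo
    have hpre : (fun s : ℝ => t - s) ⁻¹' (Ioo 0 t) = Ioo 0 t := by
      ext s
      simp only [mem_preimage, mem_Ioo]
      constructor <;> rintro ⟨h1, h2⟩ <;> constructor <;> linarith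
    rwa [hpre] at h
  have hemb : MeasurableEmbedding (fun s : ℝ => t - s) :=
    (MeasurableEquiv.subLeft t).measurableEmbedding
  have hφmp : MeasurePreserving (Prod.map (fun s : ℝ => t - s)
        (id : EuclideanSpace ℝ (Fin d) → EuclideanSpace ℝ (Fin d)))
      (((volume : Measure ℝ).restrict (Ioo 0 t)).prod (volume.restrict Ω))
      (((volume : Measure ℝ).restrict (Ioo 0 t)).prod (volume.restrict Ω)) :=
    hmp.prod (MeasurePreserving.id _)
  have hφemb : MeasurableEmbedding (Prod.map (fun s : ℝ => t - s)
      (id : EuclideanSpace ℝ (Fin d) → EuclideanSpace ℝ (Fin d))) :=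
    hemb.prodMap MeasurableEmbedding.id
  have hWm : AEStronglyMeasurable (fun p : ℝ × EuclideanSpace ℝ (Fin d) => v (t - p.1) p.2)
      (((volume : Measure ℝ).restrict (Ioo 0 t)).prod (volume.restrict Ω)) := by
    have h := (hφmp.aestronglyMeasurable_comp_iff hφemb).mpr hv_prod_t
    exact h
  have hNν : AEStronglyMeasurable N ((volume : Measure ℝ).restrict (Ioo 0 t)) := by
    rw [hνeq]; exact hNm.restrict
  have hNshift : AEStronglyMeasurable (fun s => N (t - s))
      ((volume : Measure ℝ).restrict (Ioo 0 t)) :=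
    (hmp.aestronglyMeasurable_comp_iff hemb).mpr hNν
  have hkm : AEStronglyMeasurable kdot ((volume : Measure ℝ).restrict (Ioo 0 t)) := by
    rw [hνeq]; exact hkdot.1.restrict
  have hvtm := hvt.aestronglyMeasurable
  have hv₀m := hv₀.aestronglyMeasurable
  -- the key product function
  set F : ℝ × EuclideanSpace ℝ (Fin d) → ℝ :=
    fun p => kdot p.1 * (v t p.2 * (v (t - p.1) p.2 - v₀ p.2)) with hF_def
  have hFm : AEStronglyMeasurable F
      (((volume : Measure ℝ).restrict (Ioo 0 t)).prod (volume.restrict Ω)) :=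
    hkm.comp_fst.mul (hvtm.comp_snd.mul (hWm.sub hv₀m.comp_snd))
  have hFslice : ∀ᵐ s ∂(volume.restrict (Ioo 0 t)),
      Integrable (fun x => F (s, x)) (volume.restrict Ω) := by
    filter_upwards [hshift] with s hs
    have h1 : Integrable (fun x => v t x * (v (t - s) x - v₀ x)) (volume.restrict Ω) :=
      hvt.integrable_mul₂ (hs.sub hv₀)
    simpa [hF_def] using h1.const_mul (kdot s)
  -- Cauchy–Schwarz bounds
  have hCSs : ∀ᵐ s ∂(volume.restrict (Ioo 0 t)),
      (∫ x in Ω, v t x * v (t - s) x) ≤ N t * N (t - s) := by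
    filter_upwards [hshift] with s hs
    rw [hN t, hN (t - s)]
    exact integral_mul_le_cs hvt hs
  have hB : (∫ x in Ω, v t x * v₀ x) ≤ N t * N₀ := by
    rw [hN t, hN₀]
    exact integral_mul_le_cs hvt hv₀
  -- norm bound for Fubini
  have hbound : ∀ᵐ s ∂(volume.restrict (Ioo 0 t)),
      (∫ x in Ω, ‖F (s, x)‖) ≤ |kdot s| * (N t * (N (t - s) + N₀)) := by
    filter_upwards [hshift] with s hs
    have e1 : (∫ x in Ω, ‖F (s, x)‖) = |kdot s| * ∫ x in Ω, |v t x * (v (t - s) x - v₀ x)| := by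
      rw [← integral_const_mul]
      refine integral_congr_ae (Filter.Eventually.of_forall fun x => ?_)
      simp [hF_def, abs_mul]
    rw [e1]
    have h2 : (∫ x in Ω, |v t x * (v (t - s) x - v₀ x)|)
        ≤ N t * N (t - s) + N t * N₀ := by
      have hint1 : Integrable (fun x => |v t x| * |v (t - s) x|) (volume.restrict Ω) :=
        hvt.abs.integrable_mul₂ hs.abs
      have hint2 : Integrable (fun x => |v t x| * |v₀ x|) (volume.restrict Ω) :=
        hvt.abs.integrable_mul₂ hv₀.abs
      have step1 : (∫ x in Ω, |v t x * (v (t - s) x - v₀ x)|)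
          ≤ ∫ x in Ω, (|v t x| * |v (t - s) x| + |v t x| * |v₀ x|) := by
        refine integral_mono_ae ?_ (hint1.add hint2) ?_
        · exact (hvt.integrable_mul₂ (hs.sub hv₀)).abs
        · refine Filter.Eventually.of_forall fun x => ?_
          simp only [abs_mul]
          calc |v t x| * |v (t - s) x - v₀ x| ≤ |v t x| * (|v (t - s) x| + |v₀ x|) := by
                gcongr
                exact abs_sub _ _
            _ = |v t x| * |v (t - s) x| + |v t x| * |v₀ x| := by ring
      have step2 : (∫ x in Ω, (|v t x| * |v (t - s) x| + |v t x| * |v₀ x|))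
          ≤ N t * N (t - s) + N t * N₀ := by
        rw [integral_add hint1 hint2]
        have c1 : (∫ x in Ω, |v t x| * |v (t - s) x|) ≤ N t * N (t - s) := by
          rw [hN t, hN (t - s)]
          have := integral_mul_le_cs hvt.abs hs.abs
          simpa [sq_abs] using this
        have c2 : (∫ x in Ω, |v t x| * |v₀ x|) ≤ N t * N₀ := by
          rw [hN t, hN₀]
          have := integral_mul_le_cs hvt.abs hv₀.abs
          simpa [sq_abs] using this
        linarith
      linarith
    calc |kdot s| * ∫ x in Ω, |v t x * (v (t - s) x - v₀ x)|
        ≤ |kdot s| * (N t * N (t - s) + N t * N₀) :=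
          mul_le_mul_of_nonneg_left h2 (abs_nonneg _)
      _ = |kdot s| * (N t * (N (t - s) + N₀)) := by ring
  -- the majorant is integrable
  have hmajor : Integrable (fun s => |kdot s| * (N t * (N (t - s) + N₀)))
      ((volume : Measure ℝ).restrict (Ioo 0 t)) := by
    have h1 := hconv'.const_mul (N t)
    have h2 := (hkdot_t.abs.const_mul (N t * N₀))
    refine (h1.add h2).congr ?_
    refine Filter.Eventually.of_forall fun s => ?_
    show N t * (|kdot s| * N (t - s)) + N t * N₀ * |kdot s|
        = |kdot s| * (N t * (N (t - s) + N₀))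
    ring
  -- joint integrability on the product
  have hFint : Integrable F
      (((volume : Measure ℝ).restrict (Ioo 0 t)).prod (volume.restrict Ω)) := by
    refine (integrable_prod_iff hFm).mpr ⟨hFslice, ?_⟩
    refine hmajor.mono' hFm.norm.integral_prod_right' ?_
    filter_upwards [hbound] with s h1
    rw [Real.norm_eq_abs, abs_of_nonneg (integral_nonneg fun x => norm_nonneg _)]
    exact h1
  -- notation
  set B : ℝ := ∫ x in Ω, v t x * v₀ x with hB_def
  set C : ℝ → ℝ := fun s => ∫ x in Ω, v t x * v (t - s) x with hC_def
  have hIoc : ∀ f : ℝ → ℝ, (∫ s in (0:ℝ)..t, f s) = ∫ s in Ioo 0 t, f s := fun f => by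
    rw [intervalIntegral.integral_of_le ht.1.le, setIntegral_congr_set Ioo_ae_eq_Ioc.symm]
  have hkdotν : (∫ s in Ioo 0 t, kdot s) = k t - k 0 := by
    rw [← hIoc]
    have := hk t htIcc
    linarith
  -- integrability of various s-functions
  have hCmB_int : Integrable (fun s => kdot s * (C s - B))
      ((volume : Measure ℝ).restrict (Ioo 0 t)) := by
    refine hFint.integral_prod_left.congr ?_
    filter_upwards [hshift] with s hs
    have h1 : Integrable (fun x => v t x * v (t - s) x) (volume.restrict Ω) :=
      hvt.integrable_mul₂ hs
    have h2 : Integrable (fun x => v t x * v₀ x) (volume.restrict Ω) :=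
      hvt.integrable_mul₂ hv₀
    calc (∫ x in Ω, F (s, x))
        = ∫ x in Ω, kdot s * (v t x * v (t - s) x - v t x * v₀ x) := by
          refine integral_congr_ae (Filter.Eventually.of_forall fun x => ?_)
          simp only [hF_def]; ring
      _ = kdot s * ∫ x in Ω, (v t x * v (t - s) x - v t x * v₀ x) := integral_const_mul _ _
      _ = kdot s * (C s - B) := by rw [integral_sub h1 h2]
  have hCint : Integrable (fun s => kdot s * C s)
      ((volume : Measure ℝ).restrict (Ioo 0 t)) := by
    refine (hCmB_int.add (hkdot_t.mul_const B)).congr ?_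
    refine Filter.Eventually.of_forall fun s => ?_
    show kdot s * (C s - B) + kdot s * B = kdot s * C s
    ring
  have hkNint : Integrable (fun s => kdot s * N (t - s))
      ((volume : Measure ℝ).restrict (Ioo 0 t)) := by
    refine hconv'.mono' (hkm.mul hNshift) ?_
    refine Filter.Eventually.of_forall fun s => ?_
    rw [Real.norm_eq_abs, abs_mul, abs_of_nonneg (hNnonneg _)]
  -- rewrite LHS
  have hsplit : (∫ x in Ω, v t x *
        (k 0 * (v t x - v₀ x) + ∫ s in (0:ℝ)..t, kdot s * (v (t - s) x - v₀ x)))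
      = k 0 * ((∫ x in Ω, v t x * v t x) - B) + ∫ s in Ioo 0 t, kdot s * (C s - B) := by
    have e_inner : ∀ x, v t x *
          (k 0 * (v t x - v₀ x) + ∫ s in (0:ℝ)..t, kdot s * (v (t - s) x - v₀ x))
        = k 0 * (v t x * v t x - v t x * v₀ x) + ∫ s in Ioo 0 t, F (s, x) := by
      intro x
      rw [hIoc]
      have : (∫ s in Ioo 0 t, F (s, x))
          = v t x * ∫ s in Ioo 0 t, kdot s * (v (t - s) x - v₀ x) := by
        rw [← integral_const_mul]
        refine integral_congr_ae (Filter.Eventually.of_forall fun s => ?_)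
        simp only [hF_def]; ring
      rw [this]; ring
    have hint1 : Integrable (fun x => k 0 * (v t x * v t x - v t x * v₀ x))
        (volume.restrict Ω) :=
      ((hvt.integrable_mul₂ hvt).sub (hvt.integrable_mul₂ hv₀)).const_mul (k 0)
    have hint2 : Integrable (fun x => ∫ s in Ioo 0 t, F (s, x)) (volume.restrict Ω) :=
      hFint.integral_prod_right
    calc (∫ x in Ω, v t x *
          (k 0 * (v t x - v₀ x) + ∫ s in (0:ℝ)..t, kdot s * (v (t - s) x - v₀ x)))
        = ∫ x in Ω, (k 0 * (v t x * v t x - v t x * v₀ x) + ∫ s in Ioo 0 t, F (s, x)) := by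
          exact integral_congr_ae (Filter.Eventually.of_forall fun x => e_inner x)
      _ = (∫ x in Ω, k 0 * (v t x * v t x - v t x * v₀ x))
          + ∫ x in Ω, ∫ s in Ioo 0 t, F (s, x) := integral_add hint1 hint2
      _ = k 0 * ((∫ x in Ω, v t x * v t x) - B)
          + ∫ s in Ioo 0 t, ∫ x in Ω, F (s, x) := by
          rw [integral_const_mul, integral_sub (hvt.integrable_mul₂ hvt) (hvt.integrable_mul₂ hv₀)]
          congr 1
          exact (integral_integral_swap (f := fun s x => F (s, x)) hFint).symm
      _ = k 0 * ((∫ x in Ω, v t x * v t x) - B) + ∫ s in Ioo 0 t, kdot s * (C s - B) := by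
          congr 1
          refine integral_congr_ae ?_
          filter_upwards [hshift] with s hs
          have h1 : Integrable (fun x => v t x * v (t - s) x) (volume.restrict Ω) :=
            hvt.integrable_mul₂ hs
          have h2 : Integrable (fun x => v t x * v₀ x) (volume.restrict Ω) :=
            hvt.integrable_mul₂ hv₀
          calc (∫ x in Ω, F (s, x))
              = ∫ x in Ω, kdot s * (v t x * v (t - s) x - v t x * v₀ x) := by
                refine integral_congr_ae (Filter.Eventually.of_forall fun x => ?_)
                simp only [hF_def]; ring
            _ = kdot s * ∫ x in Ω, (v t x * v (t - s) x - v t x * v₀ x) :=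
                integral_const_mul _ _
            _ = kdot s * (C s - B) := by rw [integral_sub h1 h2]
  have hsplit2 : (∫ s in Ioo 0 t, kdot s * (C s - B))
      = (∫ s in Ioo 0 t, kdot s * C s) - (k t - k 0) * B := by
    calc (∫ s in Ioo 0 t, kdot s * (C s - B))
        = ∫ s in Ioo 0 t, (kdot s * C s - kdot s * B) := by
          refine integral_congr_ae (Filter.Eventually.of_forall fun s => ?_)
          ring
      _ = (∫ s in Ioo 0 t, kdot s * C s) - ∫ s in Ioo 0 t, kdot s * B :=
          integral_sub hCint (hkdot_t.mul_const B)
      _ = (∫ s in Ioo 0 t, kdot s * C s) - (k t - k 0) * B := by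
          rw [integral_mul_const, hkdotν]
  -- rewrite RHS
  have hRHS : N t * (k 0 * (N t - N₀) + ∫ s in (0:ℝ)..t, kdot s * (N (t - s) - N₀))
      = k 0 * (N t * N t - N t * N₀)
        + (N t * ∫ s in Ioo 0 t, kdot s * N (t - s)) - (k t - k 0) * (N t * N₀) := by
    rw [hIoc]
    have e : (∫ s in Ioo 0 t, kdot s * (N (t - s) - N₀))
        = (∫ s in Ioo 0 t, kdot s * N (t - s)) - (k t - k 0) * N₀ := by
      calc (∫ s in Ioo 0 t, kdot s * (N (t - s) - N₀))
          = ∫ s in Ioo 0 t, (kdot s * N (t - s) - kdot s * N₀) := by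
            refine integral_congr_ae (Filter.Eventually.of_forall fun s => ?_)
            ring
        _ = (∫ s in Ioo 0 t, kdot s * N (t - s)) - ∫ s in Ioo 0 t, kdot s * N₀ :=
            integral_sub hkNint (hkdot_t.mul_const N₀)
        _ = (∫ s in Ioo 0 t, kdot s * N (t - s)) - (k t - k 0) * N₀ := by
            rw [integral_mul_const, hkdotν]
    rw [e]; ring
  -- monotonicity of the convolution term
  have hmono : N t * (∫ s in Ioo 0 t, kdot s * N (t - s)) ≤ ∫ s in Ioo 0 t, kdot s * C s := by
    rw [← integral_const_mul]
    refine integral_mono_ae (hkNint.const_mul (N t)) hCint ?_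
    filter_upwards [hCSs, hkneg'] with s h1 h2
    calc N t * (kdot s * N (t - s)) = kdot s * (N t * N (t - s)) := by ring
      _ ≤ kdot s * C s := mul_le_mul_of_nonpos_left h1 h2
  -- conclude
  have hA : (∫ x in Ω, v t x * v t x) = N t * N t := by
    rw [hNsq t]
    refine integral_congr_ae (Filter.Eventually.of_forall fun x => ?_)
    show v t x * v t x = v t x ^ 2
    rw [sq]
  have hktnn : 0 ≤ k t := hknonneg t htIcc
  have hk0nn : 0 ≤ k 0 := hknonneg 0 ⟨le_rfl, hT.le⟩
  have hktB : k t * B ≤ k t * (N t * N₀) := mul_le_mul_of_nonneg_left hB hktnn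
  rw [ge_iff_le, hRHS, hsplit, hsplit2, hA]
  nlinarith [hmono, hktB]
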